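/- arXiv:1208.6184 — 2 statements merged into one kernel-verified Lean document; each statement's English description precedes it below -/
import Mathlib

section
/- Let T be an operator of weak type (1,1), i.e. there is C > 0 with |{x : |Tg(x)| > λ}| ≤ C‖g‖_{L¹}/λ for all integrable g and all λ > 0. Let 0 < s ≤ 1/2 and 1/2 ≤ t ≤ 1−s. Then there is a constant c₁ (depending on n, s and C) such that for every cube Q ⊂ ℝⁿ, every locally integrable f, and every λ > 0, setting f₁ = (f − m_f(t,Q))·χ_{2Q}, one has |{z ∈ Q : |Tf₁(z)| > λ}| ≤ c₁ · (|Q|/λ) · inf_{y ∈ Q} M♯f(y). -/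
open MeasureTheory ENNReal

namespace LocalMedian

/-- Euclidean space `ℝⁿ`. -/
abbrev Sp (n : ℕ) := EuclideanSpace ℝ (Fin n)

/-- An axis-parallel cube in `ℝⁿ`, given by its lower corner and (positive) sidelength. -/
structure Cube (n : ℕ) where
  corner : Sp n
  side : ℝ
  side_pos : 0 < side

namespace Cube

variable {n : ℕ}

/-- The set of points of the cube. -/
def set (Q : Cube n) : Set (Sp n) :=
  {x | ∀ i, Q.corner i ≤ x i ∧ x i ≤ Q.corner i + Q.side}

/-- The center of the cube. -/
noncomputable def center (Q : Cube n) : Sp n := WithLp.toLp 2 (fun i => Q.corner i + Q.side / 2)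

/-- The cube concentric with `Q` whose sidelength is `r` times that of `Q`. -/
noncomputable def dilate (Q : Cube n) (r : ℝ) (hr : 0 < r) : Cube n where
  corner := WithLp.toLp 2 (fun i => Q.center i - r * Q.side / 2)
  side := r * Q.side
  side_pos := mul_pos hr Q.side_pos

/-- `Q` is a dyadic subcube of `Q₀`, i.e. obtained from `Q₀` by repeated dyadic
subdivision into `2ⁿ` congruent subcubes. -/
def dyadicSub (Q₀ Q : Cube n) : Prop :=
  ∃ (k : ℕ) (m : Fin n → ℕ), (∀ i, m i < 2 ^ k) ∧
    Q.side = Q₀.side / 2 ^ k ∧ ∀ i, Q.corner i = Q₀.corner i + Q.side * m i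

/-- `Q` is one of the `2ⁿ` dyadic children of `P` (so `P` is the dyadic parent of `Q`). -/
def isDyadicChild (Q P : Cube n) : Prop :=
  Q.side = P.side / 2 ∧ ∃ m : Fin n → ℕ, (∀ i, m i < 2) ∧
    ∀ i, Q.corner i = P.corner i + Q.side * m i

end Cube

namespace Cube

variable {n : ℕ}

lemma volume_set (Q : Cube n) : volume Q.set = ENNReal.ofReal (Q.side ^ n) := by
  have h := (EuclideanSpace.volume_preserving_symm_measurableEquiv_toLp (ι := Fin n)).measure_preimage
    (s := Set.univ.pi fun i => Set.Icc (Q.corner i) (Q.corner i + Q.side))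
    (MeasurableSet.univ_pi (fun i => measurableSet_Icc)).nullMeasurableSet
  have hpre : (MeasurableEquiv.toLp 2 (Fin n → ℝ)).symm ⁻¹'
      (Set.univ.pi fun i => Set.Icc (Q.corner i) (Q.corner i + Q.side)) = Q.set := by
    ext x
    simp only [Set.mem_preimage, Set.mem_pi, Set.mem_univ, true_implies, Set.mem_Icc]
    rfl
  rw [hpre] at h
  rw [h, volume_pi_pi]
  simp [Real.volume_Icc, ENNReal.ofReal_pow Q.side_pos.le]

lemma volume_set_lt_top (Q : Cube n) : volume Q.set < ⊤ := by
  rw [Q.volume_set]; exact ofReal_lt_top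

lemma corner_mem (Q : Cube n) : Q.corner ∈ Q.set :=
  fun i => ⟨le_refl _, by linarith [Q.side_pos]⟩

lemma subset_dilate2 (Q : Cube n) (h : (0:ℝ) < 2) : Q.set ⊆ (Q.dilate 2 h).set := by
  intro x hx i
  have := (hx i).1; have := (hx i).2; have := Q.side_pos
  simp only [dilate, center, WithLp.ofLp_toLp]
  constructor <;> [nlinarith; nlinarith]

lemma measurableSet_set (Q : Cube n) : MeasurableSet Q.set := by
  have : Q.set = ⋂ i, {x : Sp n | Q.corner i ≤ x i ∧ x i ≤ Q.corner i + Q.side} := by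
    ext x; simp [Cube.set, Set.mem_iInter]
  rw [this]
  exact MeasurableSet.iInter fun i =>
    ((measurableSet_le measurable_const ((measurable_pi_apply i).comp (WithLp.measurable_ofLp 2 _))).inter
      (measurableSet_le ((measurable_pi_apply i).comp (WithLp.measurable_ofLp 2 _)) measurable_const))

lemma isBounded_set (Q : Cube n) : Bornology.IsBounded Q.set := by
  apply (Metric.isBounded_closedBall
    (x := Q.corner) (r := Q.side * Real.sqrt n)).subset
  intro x hx
  simp only [Metric.mem_closedBall]
  rw [EuclideanSpace.dist_eq]
  have h1 : ∀ i, dist (x i) (Q.corner i) ^ 2 ≤ Q.side ^ 2 := by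
    intro i
    have h1 := (hx i).1; have h2 := (hx i).2
    rw [Real.dist_eq, sq_abs]
    nlinarith
  calc Real.sqrt (∑ i, dist (x i) (Q.corner i) ^ 2)
      ≤ Real.sqrt (∑ _i : Fin n, Q.side ^ 2) :=
        Real.sqrt_le_sqrt (Finset.sum_le_sum fun i _ => h1 i)
    _ = Real.sqrt ((n : ℝ) * Q.side ^ 2) := by simp [Finset.sum_const, mul_comm]
    _ ≤ Q.side * Real.sqrt n := by
        rw [Real.sqrt_mul (Nat.cast_nonneg n), Real.sqrt_sq Q.side_pos.le]; ring_nf; rfl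

lemma integrableOn (Q : Cube n) {f : Sp n → ℝ} (hf : LocallyIntegrable f volume) :
    IntegrableOn f Q.set volume := by
  have hc : IsCompact (closure Q.set) := Q.isBounded_set.isCompact_closure
  exact (hf.integrableOn_isCompact hc).mono_set subset_closure

lemma markov (Q : Cube n) {g : Sp n → ℝ} (hg : IntegrableOn g Q.set volume)
    (hg0 : ∀ y, 0 ≤ g y) {ε : ℝ} (hε : 0 < ε) :
    volume {y ∈ Q.set | ε ≤ g y} ≤ ENNReal.ofReal ((∫ y in Q.set, g y) / ε) := by
  have hset : {y ∈ Q.set | ε ≤ g y} = {y | ε ≤ g y} ∩ Q.set := by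
    ext y; exact and_comm
  have hre : volume {y ∈ Q.set | ε ≤ g y}
      = (volume.restrict Q.set) {y | ε ≤ g y} := by
    rw [Measure.restrict_apply' Q.measurableSet_set, hset]
  have h := mul_meas_ge_le_integral_of_nonneg
    (μ := volume.restrict Q.set) (Filter.Eventually.of_forall hg0) hg ε
  have hfin : (volume.restrict Q.set) {y | ε ≤ g y} ≠ ⊤ := by
    rw [Measure.restrict_apply' Q.measurableSet_set]
    exact (lt_of_le_of_lt (measure_mono Set.inter_subset_right) Q.volume_set_lt_top).ne
  rw [hre, ← ENNReal.ofReal_toReal hfin]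
  apply ENNReal.ofReal_le_ofReal
  rw [le_div_iff₀ hε, mul_comm]
  exact h

end Cube


variable {n : ℕ}

/-- The (maximal) median of `f` over the cube `Q` with parameter `t`:
`m_f(t,Q) = sup { M : |{y ∈ Q : f y < M}| ≤ t|Q| }`. -/
noncomputable def median (f : Sp n → ℝ) (t : ℝ) (Q : Cube n) : ℝ :=
  sSup {M : ℝ | volume {y ∈ Q.set | f y < M} ≤ ENNReal.ofReal t * volume Q.set}

/-- The local oscillation `inf_c inf {α ≥ 0 : |{y ∈ Q : |f y - c| > α}| < s|Q|}`. -/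
noncomputable def osc (f : Sp n → ℝ) (s : ℝ) (Q : Cube n) : ℝ :=
  ⨅ c : ℝ, sInf {α : ℝ | 0 ≤ α ∧
    volume {y ∈ Q.set | α < |f y - c|} < ENNReal.ofReal s * volume Q.set}

/-- The local sharp maximal function `M♯_{0,s,Q₀} f`, restricted to the cube `Q₀`. -/
noncomputable def sharpLoc (f : Sp n → ℝ) (s : ℝ) (Q₀ : Cube n) (x : Sp n) : ℝ≥0∞ :=
  ⨆ Q : {Q : Cube n // x ∈ Q.set ∧ Q.set ⊆ Q₀.set}, ENNReal.ofReal (osc f s Q.1)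

/-- The local sharp maximal function `M♯_{0,s} f` (over all cubes containing `x`). -/
noncomputable def sharp (f : Sp n → ℝ) (s : ℝ) (x : Sp n) : ℝ≥0∞ :=
  ⨆ Q : {Q : Cube n // x ∈ Q.set}, ENNReal.ofReal (osc f s Q.1)

/-- The Hardy–Littlewood maximal function (over cubes containing `x`). -/
noncomputable def maximal (f : Sp n → ℝ) (x : Sp n) : ℝ≥0∞ :=
  ⨆ Q : {Q : Cube n // x ∈ Q.set},
    (∫⁻ y in Q.1.set, ENNReal.ofReal |f y|) / volume Q.1.set

/-- The Hardy–Littlewood maximal function of an `ℝ≥0∞`-valued function. -/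
noncomputable def maximalE (g : Sp n → ℝ≥0∞) (x : Sp n) : ℝ≥0∞ :=
  ⨆ Q : {Q : Cube n // x ∈ Q.set}, (∫⁻ y in Q.1.set, g y) / volume Q.1.set

/-- The average `(1/|Q|) ∫_Q g`. -/
noncomputable def cubeAvg (g : Sp n → ℝ) (Q : Cube n) : ℝ :=
  (volume Q.set).toReal⁻¹ * ∫ y in Q.set, g y

/-- The Fefferman–Stein sharp maximal function
`M♯ g(x) = sup_{Q ∋ x} (1/|Q|) ∫_Q |g - g_Q|`. -/
noncomputable def fsSharp (g : Sp n → ℝ) (x : Sp n) : ℝ≥0∞ :=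
  ⨆ Q : {Q : Cube n // x ∈ Q.set},
    ENNReal.ofReal (cubeAvg (fun y => |g y - cubeAvg g Q.1|) Q.1)


lemma cubeAvg_abs_nonneg (g : Sp n → ℝ) (c : ℝ) (Q : Cube n) :
    0 ≤ cubeAvg (fun y => |g y - c|) Q :=
  mul_nonneg (inv_nonneg.2 ENNReal.toReal_nonneg) (integral_nonneg fun y => abs_nonneg _)

lemma setIntegral_eq_cubeAvg (Q : Cube n) (g : Sp n → ℝ) :
    ∫ z in Q.set, g z = (volume Q.set).toReal * cubeAvg g Q := by
  unfold cubeAvg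
  rw [← mul_assoc, mul_inv_cancel₀, one_mul]
  rw [Q.volume_set, toReal_ofReal (pow_nonneg Q.side_pos.le n)]
  exact (pow_pos Q.side_pos n).ne'

lemma median_bound (Q : Cube n) {f : Sp n → ℝ} (hf : IntegrableOn f Q.set volume)
    {t s : ℝ} (hs0 : 0 < s) (ht : 1/2 ≤ t) (ht1 : t ≤ 1 - s) :
    |median f t Q - cubeAvg f Q| ≤ (2 + 1/s) * cubeAvg (fun y => |f y - cubeAvg f Q|) Q := by
  set fQ := cubeAvg f Q with hfQdef
  set a := cubeAvg (fun y => |f y - fQ|) Q with hadef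
  set S := {M : ℝ | volume {y ∈ Q.set | f y < M} ≤ ENNReal.ofReal t * volume Q.set} with hSdef
  have hSm : median f t Q = sSup S := rfl
  set v := (volume Q.set).toReal with hvdef
  have hv : v = Q.side ^ n := by
    rw [hvdef, Q.volume_set, toReal_ofReal (pow_nonneg Q.side_pos.le n)]
  have hvpos : 0 < v := hv ▸ pow_pos Q.side_pos n
  have hInt : IntegrableOn (fun y => |f y - fQ|) Q.set volume :=
    (hf.sub (integrableOn_const Q.volume_set_lt_top.ne)).abs
  have hI : ∫ y in Q.set, |f y - fQ| = v * a := by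
    rw [hadef]; unfold cubeAvg; rw [← hvdef]; field_simp
  have ha0 : 0 ≤ a := cubeAvg_abs_nonneg f fQ Q
  have ht0 : 0 < t := lt_of_lt_of_le (by norm_num) ht
  have hst : 0 < 1 - t := by linarith
  have hM : ∀ ε : ℝ, 0 < ε → volume {y ∈ Q.set | ε ≤ |f y - fQ|}
      ≤ ENNReal.ofReal (v * a / ε) := by
    intro ε hε
    rw [← hI]
    exact Q.markov hInt (fun y => abs_nonneg _) hε
  have hVQ : ENNReal.ofReal t * volume Q.set = ENNReal.ofReal (t * v) := by
    rw [ENNReal.ofReal_mul ht0.le, hvdef, ofReal_toReal Q.volume_set_lt_top.ne]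
  -- upper bound on elements of S
  have hub : ∀ M ∈ S, M ≤ fQ + a / (1 - t) := by
    intro M hMS
    by_contra hcon
    push_neg at hcon
    set ε := M - fQ with hεdef
    have hεpos : 0 < ε := by
      have := div_nonneg ha0 hst.le; simp only [hεdef]; linarith
    have hcon' : a < (1 - t) * ε := by
      have h5 : a / (1 - t) < ε := by simp only [hεdef]; linarith
      have := (div_lt_iff₀ hst).1 h5; linarith
    have hsub : Q.set ⊆ {y ∈ Q.set | f y < M} ∪ {y ∈ Q.set | ε ≤ |f y - fQ|} := by
      intro y hy
      rcases lt_or_ge (f y) M with h | h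
      · exact Or.inl ⟨hy, h⟩
      · exact Or.inr ⟨hy, le_trans (by simp only [hεdef]; linarith) (le_abs_self _)⟩
    have hvol := (measure_mono (μ := (volume : Measure (Sp n))) hsub).trans (measure_union_le _ _)
    have hchain : volume Q.set ≤ ENNReal.ofReal (t * v + v * a / ε) := by
      refine hvol.trans ?_
      rw [ENNReal.ofReal_add (mul_nonneg ht0.le hvpos.le)
        (div_nonneg (mul_nonneg hvpos.le ha0) hεpos.le)]
      exact add_le_add (hMS.trans hVQ.le) (hM ε hεpos)
    have hreal : v ≤ t * v + v * a / ε := by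
      have hOV : volume Q.set = ENNReal.ofReal v := (ofReal_toReal Q.volume_set_lt_top.ne).symm
      rw [hOV] at hchain
      exact (ENNReal.ofReal_le_ofReal_iff (by positivity)).1 hchain
    have h2 : v * a / ε * ε = v * a := div_mul_cancel₀ _ hεpos.ne'
    have k1 : v * ε ≤ (t*v + v*a/ε) * ε := mul_le_mul_of_nonneg_right hreal hεpos.le
    have k2 : (t*v + v*a/ε) * ε = t*v*ε + v*a := by rw [add_mul, h2]
    have k3 : v * a < v * ((1-t)*ε) := mul_lt_mul_of_pos_left hcon' hvpos
    rw [k2] at k1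
    nlinarith [k1, k3]
  -- membership criterion
  have hmem : ∀ β : ℝ, 0 < β → a ≤ t * β → (fQ - β) ∈ S := by
    intro β hβ hβa
    have hsub : {y ∈ Q.set | f y < fQ - β} ⊆ {y ∈ Q.set | β ≤ |f y - fQ|} := by
      rintro y ⟨hy, hlt⟩
      refine ⟨hy, ?_⟩
      have := le_abs_self (fQ - f y)
      rw [abs_sub_comm] at this
      linarith
    refine (measure_mono hsub).trans ((hM β hβ).trans ?_)
    rw [hVQ]
    apply ENNReal.ofReal_le_ofReal
    rw [div_le_iff₀ hβ]
    nlinarith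
  have hne : S.Nonempty := by
    refine ⟨fQ - (a/t + 1), hmem _ (by positivity) ?_⟩
    have h3 : t * (a/t) = a := by field_simp
    nlinarith
  have hbdd : BddAbove S := ⟨fQ + a / (1 - t), hub⟩
  have h1 : median f t Q ≤ fQ + a / (1 - t) := by rw [hSm]; exact csSup_le hne hub
  have h2 : fQ - a/t ≤ median f t Q := by
    rw [hSm]
    refine le_of_forall_pos_le_add ?_
    intro ε hε
    have h3 : t * (a/t) = a := by field_simp
    have h4 := le_csSup hbdd (hmem (a/t + ε) (by positivity) (by nlinarith))
    linarith
  have h5 : a / (1 - t) ≤ a / s := by gcongr; linarith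
  have h6 : a / t ≤ 2 * a := by
    rw [div_le_iff₀ ht0]
    nlinarith [mul_nonneg ha0 (by linarith : (0:ℝ) ≤ 2*t - 1)]
  have h7 : (2 + 1/s) * a = 2*a + a/s := by ring
  rw [abs_le]
  constructor <;> [linarith [div_nonneg ha0 hs0.le]; linarith [div_nonneg ha0 hs0.le]]

/-- Let `T` be of weak type (1,1), `0 < s ≤ 1/2`, `1/2 ≤ t ≤ 1 − s`.
There is `c₁ > 0` such that for every cube `Q ⊂ ℝⁿ`, every locally integrable `f`, and
every `λ > 0`, with `f₁ = (f − m_f(t,Q)) χ_{2Q}`: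
`|{z ∈ Q : |Tf₁(z)| > λ}| ≤ c₁ (|Q|/λ) inf_{y ∈ Q} M♯f(y)`. -/
theorem statement11 {n : ℕ} (T : (Sp n → ℝ) → (Sp n → ℝ)) (CT : ℝ)
    (hT : ∀ g : Sp n → ℝ, Integrable g → ∀ lam : ℝ, 0 < lam →
      volume {x | ENNReal.ofReal lam < ENNReal.ofReal |T g x|}
        ≤ ENNReal.ofReal CT * (∫⁻ x, ENNReal.ofReal |g x|) / ENNReal.ofReal lam)
    (s t : ℝ) (hs0 : 0 < s) (hs : s ≤ 1 / 2) (ht : 1 / 2 ≤ t) (ht1 : t ≤ 1 - s) :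
    ∃ c₁ : ℝ, 0 < c₁ ∧
      ∀ (Q : Cube n) (f : Sp n → ℝ), LocallyIntegrable f volume →
        ∀ lam : ℝ, 0 < lam →
          volume {z ∈ Q.set |
              ENNReal.ofReal lam <
                ENNReal.ofReal
                  |T (Set.indicator (Q.dilate 2 (by norm_num)).set
                      (fun y => f y - median f t Q)) z|}
            ≤ ENNReal.ofReal c₁ * volume Q.set * (⨅ y : Q.set, fsSharp f ↑y) /
                ENNReal.ofReal lam := by
  classical
  have h1s : (0:ℝ) < 1/s := one_div_pos.2 hs0
  have e2n : (0:ℝ) ≤ 2^n := by positivity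
  have hmax1 : (0:ℝ) < max CT 0 + 1 := by linarith [le_max_right CT 0]
  have hKpos : (0:ℝ) < 2^n * (3 + 2^n + 1/s) := _root_.mul_pos (by positivity) (by linarith)
  have hcpos : (0:ℝ) < (max CT 0 + 1) * (2^n * (3 + 2^n + 1/s)) := mul_pos hmax1 hKpos
  refine ⟨(max CT 0 + 1) * (2^n * (3 + 2^n + 1/s)), hcpos, ?_⟩
  intro Q f hf lam hlam
  set c₁ : ℝ := (max CT 0 + 1) * (2^n * (3 + 2^n + 1/s)) with hc₁def
  have h2 : (0:ℝ) < 2 := by norm_num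
  set R : Cube n := Q.dilate 2 (by norm_num) with hRdef
  have hRside : R.side = 2 * Q.side := rfl
  have hQR : Q.set ⊆ R.set := Q.subset_dilate2 _
  set m : ℝ := median f t Q with hmdef
  set f₁ : Sp n → ℝ := Set.indicator R.set (fun z => f z - m) with hf₁def
  have hfR : IntegrableOn f R.set volume := R.integrableOn hf
  have hfQ : IntegrableOn f Q.set volume := Q.integrableOn hf
  have hsubint : IntegrableOn (fun z => f z - m) R.set volume :=
    hfR.sub (integrableOn_const R.volume_set_lt_top.ne)
  have hf₁int : Integrable f₁ volume := hsubint.integrable_indicator R.measurableSet_set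
  have hvolQ : volume Q.set = ENNReal.ofReal (Q.side ^ n) := Q.volume_set
  have hvolR : volume R.set = ENNReal.ofReal ((2:ℝ)^n) * volume Q.set := by
    rw [Q.volume_set, R.volume_set, hRside, mul_pow, ← ENNReal.ofReal_mul (by positivity)]
  have hsQ : (0:ℝ) < Q.side ^ n := pow_pos Q.side_pos n
  have hvQt : (volume Q.set).toReal = Q.side ^ n := by
    rw [hvolQ, toReal_ofReal hsQ.le]
  have hvRt : (volume R.set).toReal = 2^n * Q.side ^ n := by
    rw [R.volume_set, hRside, mul_pow, toReal_ofReal (mul_nonneg e2n hsQ.le)]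
  set fRa : ℝ := cubeAvg f R with hfRa
  set fQa : ℝ := cubeAvg f Q with hfQa
  set aR : ℝ := cubeAvg (fun z => |f z - fRa|) R with haRdef
  set aQ : ℝ := cubeAvg (fun z => |f z - fQa|) Q with haQdef
  have haR0 : 0 ≤ aR := cubeAvg_abs_nonneg f fRa R
  have haQ0 : 0 ≤ aQ := cubeAvg_abs_nonneg f fQa Q
  have hIntR : IntegrableOn (fun z => |f z - fRa|) R.set volume :=
    (hfR.sub (integrableOn_const R.volume_set_lt_top.ne)).abs
  have hmed : |m - fQa| ≤ (2 + 1/s) * aQ := median_bound Q hfQ hs0 ht ht1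
  have hIR : ∫ z in R.set, |f z - fRa| = (2^n * Q.side^n) * aR := by
    rw [setIntegral_eq_cubeAvg R, hvRt, ← haRdef]
  have hfRQ : |fRa - fQa| ≤ 2^n * aR := by
    have e1 : cubeAvg (fun z => f z - fRa) Q = fQa - fRa := by
      unfold cubeAvg
      rw [integral_sub hfQ (integrableOn_const Q.volume_set_lt_top.ne),
        integral_const, smul_eq_mul, measureReal_restrict_apply_univ, measureReal_def, mul_sub, ← mul_assoc,
        inv_mul_cancel₀ (show (volume Q.set).toReal ≠ 0 by rw [hvQt]; exact hsQ.ne'), one_mul, hfQa]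
      rfl
    have e2 : |cubeAvg (fun z => f z - fRa) Q| ≤ cubeAvg (fun z => |f z - fRa|) Q := by
      unfold cubeAvg
      rw [abs_mul, abs_inv, abs_of_nonneg ENNReal.toReal_nonneg]
      gcongr
      have := norm_integral_le_integral_norm (μ := volume.restrict Q.set) (fun z => f z - fRa)
      simpa [Real.norm_eq_abs] using this
    have e3 : cubeAvg (fun z => |f z - fRa|) Q ≤ 2^n * aR := by
      unfold cubeAvg
      rw [hvQt]
      have hmono : ∫ z in Q.set, |f z - fRa| ≤ ∫ z in R.set, |f z - fRa| :=
        setIntegral_mono_set hIntR (Filter.Eventually.of_forall fun z => abs_nonneg _)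
          (HasSubset.Subset.eventuallyLE hQR)
      rw [hIR] at hmono
      rw [inv_mul_le_iff₀ hsQ]
      nlinarith
    calc |fRa - fQa| = |cubeAvg (fun z => f z - fRa) Q| := by rw [abs_sub_comm, e1]
      _ ≤ cubeAvg (fun z => |f z - fRa|) Q := e2
      _ ≤ 2^n * aR := e3
  set b : ℝ := 2^n * aR + (2 + 1/s) * aQ with hbdef
  have hb : ∀ z, |f z - m| ≤ |f z - fRa| + b := by
    intro z
    have t1 : |f z - m| ≤ |f z - fRa| + |fRa - m| := abs_sub_le _ _ _
    have t2 : |fRa - m| ≤ |fRa - fQa| + |fQa - m| := abs_sub_le _ _ _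
    have t3 : |fQa - m| = |m - fQa| := abs_sub_comm _ _
    rw [hbdef]; linarith
  have hL1 : (∫⁻ x, ENNReal.ofReal |f₁ x|) = ∫⁻ x in R.set, ENNReal.ofReal |f x - m| := by
    rw [← lintegral_indicator R.measurableSet_set]
    congr 1; funext x
    by_cases hx : x ∈ R.set <;> simp [hf₁def, Set.indicator_apply, hx]
  have hL3 : (∫⁻ x in R.set, ENNReal.ofReal |f x - fRa|)
      = ENNReal.ofReal ((2^n * Q.side^n) * aR) := by
    rw [← ofReal_integral_eq_lintegral_ofReal hIntR
      (Filter.Eventually.of_forall fun z => abs_nonneg _), hIR]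
  have hL2 : (∫⁻ x, ENNReal.ofReal |f₁ x|)
      ≤ ENNReal.ofReal ((2^n * Q.side^n) * aR) + ENNReal.ofReal b * volume R.set := by
    rw [hL1, ← hL3]
    calc ∫⁻ x in R.set, ENNReal.ofReal |f x - m|
        ≤ ∫⁻ x in R.set, (ENNReal.ofReal |f x - fRa| + ENNReal.ofReal b) :=
          lintegral_mono fun x =>
            le_trans (ENNReal.ofReal_le_ofReal (hb x)) ENNReal.ofReal_add_le
      _ = _ := by
          rw [lintegral_add_right _ measurable_const, setLIntegral_const]
  set E : ℝ≥0∞ := ENNReal.ofReal ((2:ℝ)^n) with hE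
  set F : ℝ≥0∞ := ENNReal.ofReal (2 + 1/s) with hF
  have key : ∀ y : Q.set, volume {z ∈ Q.set | ENNReal.ofReal lam < ENNReal.ofReal |T f₁ z|}
      ≤ (ENNReal.ofReal c₁ * volume Q.set) * fsSharp f ↑y / ENNReal.ofReal lam := by
    rintro ⟨y, hy⟩
    set κ : ℝ≥0∞ := fsSharp f y with hκ
    have hκR : ENNReal.ofReal aR ≤ κ := le_iSup (fun (Q' : {Q' : Cube n // y ∈ Q'.set}) =>
      ENNReal.ofReal (cubeAvg (fun z => |f z - cubeAvg f Q'.1|) Q'.1)) ⟨R, hQR hy⟩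
    have hκQ : ENNReal.ofReal aQ ≤ κ := le_iSup (fun (Q' : {Q' : Cube n // y ∈ Q'.set}) =>
      ENNReal.ofReal (cubeAvg (fun z => |f z - cubeAvg f Q'.1|) Q'.1)) ⟨Q, hy⟩
    have c1 : ENNReal.ofReal ((2^n * Q.side^n) * aR)
        = E * volume Q.set * ENNReal.ofReal aR := by
      rw [hvolQ, hE, ← ENNReal.ofReal_mul (by positivity),
        ← ENNReal.ofReal_mul (mul_nonneg e2n hsQ.le)]
    have cb : ENNReal.ofReal b = E * ENNReal.ofReal aR + F * ENNReal.ofReal aQ := by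
      rw [hbdef, ENNReal.ofReal_add (mul_nonneg e2n haR0)
        (mul_nonneg (by linarith) haQ0), ENNReal.ofReal_mul e2n,
        ENNReal.ofReal_mul (by linarith), hE, hF]
    have hint : (∫⁻ x, ENNReal.ofReal |f₁ x|) ≤ (E + E*E + F*E) * volume Q.set * κ := by
      refine hL2.trans ?_
      calc ENNReal.ofReal ((2^n * Q.side^n) * aR) + ENNReal.ofReal b * volume R.set
          = E * volume Q.set * ENNReal.ofReal aR
            + (E * ENNReal.ofReal aR + F * ENNReal.ofReal aQ) * (E * volume Q.set) := by
            rw [c1, hvolR, cb]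
        _ ≤ E * volume Q.set * κ + (E * κ + F * κ) * (E * volume Q.set) := by gcongr
        _ = (E + E*E + F*E) * volume Q.set * κ := by ring
    have hconst : ENNReal.ofReal c₁ = ENNReal.ofReal (max CT 0 + 1) * (E + E*E + F*E) := by
      rw [hc₁def, ENNReal.ofReal_mul hmax1.le]
      congr 1
      rw [show (2:ℝ)^n * (3 + 2^n + 1/s) = 2^n + 2^n*2^n + (2+1/s)*2^n by ring]
      rw [ENNReal.ofReal_add (by positivity) (mul_nonneg (by linarith) e2n),
        ENNReal.ofReal_add e2n (mul_nonneg e2n e2n),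
        ENNReal.ofReal_mul e2n, ENNReal.ofReal_mul (by linarith), hE, hF]
    have hmono : volume {z ∈ Q.set | ENNReal.ofReal lam < ENNReal.ofReal |T f₁ z|}
        ≤ volume {x | ENNReal.ofReal lam < ENNReal.ofReal |T f₁ x|} :=
      measure_mono fun z hz => hz.2
    refine hmono.trans ((hT f₁ hf₁int lam hlam).trans ?_)
    gcongr ?_ / _
    calc ENNReal.ofReal CT * (∫⁻ x, ENNReal.ofReal |f₁ x|)
        ≤ ENNReal.ofReal (max CT 0 + 1) * ((E + E*E + F*E) * volume Q.set * κ) :=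
          mul_le_mul' (ENNReal.ofReal_le_ofReal (by linarith [le_max_left CT 0])) hint
      _ = (ENNReal.ofReal c₁ * volume Q.set) * κ := by rw [hconst]; ring
  have hQne : Nonempty Q.set := ⟨⟨Q.corner, Q.corner_mem⟩⟩
  have hC0 : ENNReal.ofReal c₁ * volume Q.set ≠ 0 :=
    mul_ne_zero (ENNReal.ofReal_pos.2 hcpos).ne' (by
      rw [hvolQ]; exact (ENNReal.ofReal_pos.2 hsQ).ne')
  have hCtop : ENNReal.ofReal c₁ * volume Q.set ≠ ⊤ :=
    ENNReal.mul_ne_top ENNReal.ofReal_ne_top Q.volume_set_lt_top.ne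
  calc volume {z ∈ Q.set | ENNReal.ofReal lam < ENNReal.ofReal |T f₁ z|}
      ≤ ⨅ y : Q.set, (ENNReal.ofReal c₁ * volume Q.set) * fsSharp f ↑y / ENNReal.ofReal lam :=
        le_iInf key
    _ = ENNReal.ofReal c₁ * volume Q.set * (⨅ y : Q.set, fsSharp f ↑y) / ENNReal.ofReal lam := by
        rw [ENNReal.mul_iInf_of_ne hC0 hCtop,
          ENNReal.iInf_div_of_ne (ENNReal.ofReal_pos.2 hlam).ne' ENNReal.ofReal_ne_top]

end LocalMedian
end

section
/- Let 0 < s < 1/2 and 1/2 ≤ t < 1−s. Then for every cube Q ⊂ ℝⁿ and every measurable function f on Q, m_{|f − m_f(t,Q)|}(t,Q) ≤ 4 · inf_{y ∈ Q} M♯_{0,s,Q}f(y). -/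
open MeasureTheory ENNReal

namespace LocalMedian

variable {n : ℕ}

lemma volume_cube (Q : Cube n) :
    volume Q.set = ENNReal.ofReal Q.side ^ n := by
  have hset : Q.set = ((MeasurableEquiv.toLp 2 (Fin n → ℝ)).symm) ⁻¹'
      (Set.univ.pi fun i => Set.Icc (Q.corner i) (Q.corner i + Q.side)) := by
    ext x
    constructor
    · intro h i _
      exact h i
    · intro h i
      exact h i (Set.mem_univ i)
  rw [hset, (EuclideanSpace.volume_preserving_symm_measurableEquiv_toLp (Fin n)).measure_preimage
      ((MeasurableSet.univ_pi fun _ => measurableSet_Icc).nullMeasurableSet)]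
  rw [volume_pi_pi]
  simp [Real.volume_Icc]

lemma volume_cube_pos (Q : Cube n) : 0 < volume Q.set := by
  rw [volume_cube]
  exact ENNReal.pow_pos (ENNReal.ofReal_pos.2 Q.side_pos) n

lemma volume_cube_lt_top (Q : Cube n) : volume Q.set < ⊤ := by
  rw [volume_cube]
  exact ENNReal.pow_lt_top ENNReal.ofReal_lt_top

lemma measurableSet_cube (Q : Cube n) : MeasurableSet Q.set := by
  have : Q.set = ⋂ i, {x : Sp n | Q.corner i ≤ x i ∧ x i ≤ Q.corner i + Q.side} := by
    ext x; simp [Cube.set]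
  rw [this]
  refine MeasurableSet.iInter fun i => ?_
  have hm : Measurable fun x : Sp n => x i :=
    (measurable_pi_apply i).comp (MeasurableEquiv.toLp 2 (Fin n → ℝ)).symm.measurable
  exact (measurableSet_le measurable_const hm).inter (measurableSet_le hm measurable_const)

/-- Let `0 < s < 1/2` and `1/2 ≤ t < 1 − s`. For every cube `Q ⊂ ℝⁿ`
and every measurable `f`:
`m_{|f − m_f(t,Q)|}(t,Q) ≤ 4 inf_{y ∈ Q} M♯_{0,s,Q}f(y)`. -/
theorem statement13 {n : ℕ} (s t : ℝ) (hs0 : 0 < s) (hs : s < 1 / 2)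
    (ht : 1 / 2 ≤ t) (ht1 : t < 1 - s)
    (Q : Cube n) (f : Sp n → ℝ) (hf : Measurable f) :
    ENNReal.ofReal (median (fun y => |f y - median f t Q|) t Q)
      ≤ 4 * ⨅ y : Q.set, sharpLoc f s Q ↑y := by
  set V := volume Q.set with hV
  have hVpos : 0 < V := volume_cube_pos Q
  have hVfin : V < ⊤ := volume_cube_lt_top Q
  set S : ℝ → Set ℝ := fun c => {α : ℝ | 0 ≤ α ∧
    volume {y ∈ Q.set | α < |f y - c|} < ENNReal.ofReal s * V} with hS
  -- each S c is nonempty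
  have hSne : ∀ c, (S c).Nonempty := by
    intro c
    set E : ℕ → Set (Sp n) := fun k => {y ∈ Q.set | (k : ℝ) < |f y - c|} with hE
    have hEmeas : ∀ k, MeasurableSet (E k) := by
      intro k
      exact (measurableSet_cube Q).inter
        (measurableSet_lt measurable_const (hf.sub measurable_const).abs)
    have hanti : Antitone E := by
      intro k l hkl y hy
      exact ⟨hy.1, lt_of_le_of_lt (by exact_mod_cast Nat.cast_le.2 hkl) hy.2⟩
    have hint : ⋂ k, E k = ∅ := by
      ext y
      simp only [Set.mem_iInter, Set.mem_empty_iff_false, iff_false]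
      intro h
      obtain ⟨k, hk⟩ := exists_nat_gt (|f y - c|)
      exact absurd (h k).2 (not_lt.2 hk.le)
    have hfin : volume (E 0) ≠ ⊤ :=
      (lt_of_le_of_lt (measure_mono fun y hy => hy.1) hVfin).ne
    have htend : Filter.Tendsto (fun k => volume (E k)) Filter.atTop (nhds 0) := by
      have := tendsto_measure_iInter_atTop (μ := volume) (fun k => (hEmeas k).nullMeasurableSet)
        hanti ⟨0, hfin⟩
      rwa [hint, measure_empty] at this
    have hpos : (0 : ℝ≥0∞) < ENNReal.ofReal s * V :=
      ENNReal.mul_pos (ENNReal.ofReal_pos.2 hs0).ne' hVpos.ne'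
    obtain ⟨k, hk⟩ := (htend.eventually_lt_const hpos).exists
    exact ⟨(k : ℝ), ⟨Nat.cast_nonneg k, hk⟩⟩
  -- key measure-theoretic step
  have lower : ∀ (c α : ℝ), volume {y ∈ Q.set | α < |f y - c|} < ENNReal.ofReal s * V →
      ∀ T : Set (Sp n), Q.set \ {y ∈ Q.set | α < |f y - c|} ⊆ T →
      ¬ (volume T ≤ ENNReal.ofReal t * V) := by
    intro c α hEvol T hsub habs
    set E := {y ∈ Q.set | α < |f y - c|}
    have h1 : V ≤ volume (Q.set \ E) + volume E := by
      refine le_trans (measure_mono ?_) (measure_union_le _ _)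
      intro y hy
      by_cases hyE : y ∈ E
      · exact Set.mem_union_right _ hyE
      · exact Set.mem_union_left _ ⟨hy, hyE⟩
    have h2 : volume (Q.set \ E) ≤ ENNReal.ofReal t * V :=
      le_trans (measure_mono hsub) habs
    have h3 : V < (ENNReal.ofReal t + ENNReal.ofReal s) * V := by
      calc V ≤ volume (Q.set \ E) + volume E := h1
        _ < ENNReal.ofReal t * V + ENNReal.ofReal s * V :=
          ENNReal.add_lt_add_of_le_of_lt
            ((measure_mono Set.diff_subset).trans_lt hVfin).ne h2 hEvol
        _ = (ENNReal.ofReal t + ENNReal.ofReal s) * V := (add_mul _ _ _).symm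
    have h4 : (ENNReal.ofReal t + ENNReal.ofReal s) * V < 1 * V := by
      refine ENNReal.mul_lt_mul_left hVpos.ne' hVfin.ne ?_
      rw [← ENNReal.ofReal_add (by linarith) hs0.le]
      exact ENNReal.ofReal_lt_one.2 (by linarith)
    rw [one_mul] at h4
    exact absurd (h3.trans h4) (lt_irrefl V)
  -- main real estimate: for any c and α ∈ S c, the median of |f - m| is ≤ 2α
  have main : ∀ c α, α ∈ S c →
      median (fun y => |f y - median f t Q|) t Q ≤ 2 * α := by
    intro c α ⟨hα0, hαE⟩
    set m := median f t Q with hm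
    set E := {y ∈ Q.set | α < |f y - c|} with hEdef
    -- upper bound for members of the median-defining set of f
    have hub : ∀ M ∈ {M : ℝ | volume {y ∈ Q.set | f y < M} ≤ ENNReal.ofReal t * V},
        M ≤ c + α := by
      intro M hM
      by_contra h
      push_neg at h
      refine lower c α hαE {y ∈ Q.set | f y < M} ?_ hM
      intro y hy
      rcases hy with ⟨hyQ, hyE⟩
      have : ¬ α < |f y - c| := fun hc => hyE ⟨hyQ, hc⟩
      push_neg at this
      have := (abs_le.1 this).2
      exact ⟨hyQ, by linarith⟩
    -- membership of c - α
    have hmem : (c - α) ∈ {M : ℝ | volume {y ∈ Q.set | f y < M} ≤ ENNReal.ofReal t * V} := by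
      have hsub : {y ∈ Q.set | f y < c - α} ⊆ E := by
        intro y ⟨hyQ, hyf⟩
        exact ⟨hyQ, by rw [abs_sub_comm]; rw [lt_abs]; left; linarith⟩
      refine le_trans (measure_mono hsub) (le_trans hαE.le ?_)
      exact mul_le_mul_left (ENNReal.ofReal_le_ofReal (by linarith)) V
    have hmge : c - α ≤ m := le_csSup ⟨c + α, hub⟩ hmem
    have hmle : m ≤ c + α := csSup_le ⟨c - α, hmem⟩ hub
    -- now bound the median of |f - m|
    refine Real.sSup_le ?_ (by linarith)
    intro M hM
    by_contra h
    push_neg at h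
    refine lower c α hαE {y ∈ Q.set | |f y - m| < M} ?_ hM
    intro y hy
    rcases hy with ⟨hyQ, hyE⟩
    have hyc : ¬ α < |f y - c| := fun hc => hyE ⟨hyQ, hc⟩
    push_neg at hyc
    refine ⟨hyQ, ?_⟩
    have h1 : |f y - m| ≤ |f y - c| + |c - m| := by
      have := abs_sub_abs_le_abs_sub (f y - m) 0
      calc |f y - m| = |(f y - c) + (c - m)| := by ring_nf
        _ ≤ |f y - c| + |c - m| := abs_add_le _ _
    have h2 : |c - m| ≤ α := abs_le.2 ⟨by linarith, by linarith⟩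
    linarith
  -- conclude the real inequality
  have hoscnn : ∀ c, 0 ≤ sInf (S c) := fun c => le_csInf (hSne c) fun α hα => hα.1
  have hosc0 : 0 ≤ osc f s Q := le_ciInf hoscnn
  have key : median (fun y => |f y - median f t Q|) t Q ≤ 2 * osc f s Q := by
    have h1 : ∀ c, median (fun y => |f y - median f t Q|) t Q / 2 ≤ sInf (S c) := by
      intro c
      refine le_csInf (hSne c) fun α hα => ?_
      have := main c α hα
      linarith
    have h2 : median (fun y => |f y - median f t Q|) t Q / 2 ≤ osc f s Q := le_ciInf h1
    linarith
  -- pass to ENNReal and to the infimum of sharpLoc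
  calc ENNReal.ofReal (median (fun y => |f y - median f t Q|) t Q)
      ≤ ENNReal.ofReal (4 * osc f s Q) :=
        ENNReal.ofReal_le_ofReal (by linarith)
    _ = 4 * ENNReal.ofReal (osc f s Q) := by
        rw [ENNReal.ofReal_mul (by norm_num)]
        norm_num
    _ ≤ 4 * ⨅ y : Q.set, sharpLoc f s Q ↑y := by
        refine mul_le_mul_right (le_iInf fun y => ?_) 4
        exact le_iSup_of_le ⟨Q, y.2, subset_rfl⟩ le_rfl

end LocalMedian
end
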